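/- Let 1 ≤ p < ∞ and let T be the bounded linear operator on ℓ^p(ℤ) defined by (T f)(i) = w(i+1) f(i+1), where w(i) = 2 for i ≥ 1 and w(i) = 1 for i ≤ 0 (i.e. T is the weighted translation T_{g, w ∗ δ_g} on ℓ^p(ℤ) with g = −1). Then T is convex-cyclic. -/

import Mathlib

open Filter
open scoped ENNReal



section Aux
variable (p : ℝ≥0∞) [Fact (1 ≤ p)]

noncomputable def sg (j : ℤ) : lp (fun _ : ℤ => ℂ) p := lp.single (E := fun _ : ℤ => ℂ) p j (1:ℂ)

def ee (j : ℤ) (n : ℕ) : ℕ := (max j 0 - max (j - n) 0).toNat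

def MM (k : ℕ) : ℕ := k ^ 3

def dec (k : ℕ) : ℤ × ℤ := Denumerable.ofNat (ℤ × ℤ) (Nat.unpair k).2

noncomputable def al (k : ℕ) : ℂ := Complex.I ^ ((dec k).2.toNat)

noncomputable def rr (k : ℕ) : ℝ := (2:ℝ)⁻¹ ^ (k ^ 2)

noncomputable def cf (k : ℕ) : ℂ := ((rr k : ℝ) : ℂ) * al k

lemma rr_pos (k : ℕ) : 0 < rr k := by unfold rr; positivity

lemma rr_le_one (k : ℕ) : rr k ≤ 1 := by
  unfold rr
  exact pow_le_one₀ (by norm_num) (by norm_num)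

lemma rr_le_geo (k : ℕ) : rr k ≤ (2:ℝ)⁻¹ ^ k :=
  pow_le_pow_of_le_one (by norm_num) (by norm_num) (Nat.le_self_pow two_ne_zero k)

lemma norm_al (k : ℕ) : ‖al k‖ = 1 := by
  unfold al; rw [norm_pow, Complex.norm_I, one_pow]

lemma norm_cf (k : ℕ) : ‖cf k‖ = rr k := by
  unfold cf
  rw [norm_mul, norm_al, Complex.norm_real, Real.norm_eq_abs, abs_of_pos (rr_pos k), mul_one]

lemma norm_sg (hp : p ≠ ∞) (j : ℤ) : ‖sg p j‖ = 1 := by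
  have h0 : 0 < p.toReal := by
    refine ENNReal.toReal_pos ?_ hp
    have := (Fact.out : 1 ≤ p)
    intro h; rw [h] at this; exact (by simp at this)
  have := lp.norm_single (E := fun _ : ℤ => ℂ) (lt_of_lt_of_le zero_lt_one (Fact.out : 1 ≤ p)) j (1:ℂ)
  simpa [sg] using this

noncomputable def ff : lp (fun _ : ℤ => ℂ) p := ∑' k : ℕ, cf k • sg p (MM k)

lemma summable_ff (hp : p ≠ ∞) : Summable (fun k : ℕ => cf k • sg p (MM k)) := by
  apply Summable.of_norm_bounded (g := fun k : ℕ => (2:ℝ)⁻¹ ^ k)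
  · exact summable_geometric_of_lt_one (by norm_num) (by norm_num)
  · intro k
    rw [norm_smul, norm_cf, norm_sg p hp]
    simpa using rr_le_geo k

theorem T_single (w : ℤ → ℝ) (T : lp (fun _ : ℤ => ℂ) p →L[ℂ] lp (fun _ : ℤ => ℂ) p)
    (hT : ∀ (f : lp (fun _ : ℤ => ℂ) p) (i : ℤ), (T f : ℤ → ℂ) i = (w (i + 1) : ℂ) * f (i + 1))
    (j : ℤ) : T (sg p j) = ((w j : ℂ)) • sg p (j-1) := by
  apply lp.ext
  funext i
  have h0 := hT (sg p j) i
  show (T (sg p j) : ℤ → ℂ) i = _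
  rw [h0, lp.coeFn_smul]
  show (w (i+1) : ℂ) * (lp.single p j (1:ℂ) : ℤ → ℂ) (i+1)
      = (w j : ℂ) • (lp.single p (j-1) (1:ℂ) : ℤ → ℂ) i
  by_cases h : i = j - 1
  · subst h
    have h1 : j - 1 + 1 = j := by ring
    rw [h1, lp.single_apply_self, lp.single_apply_self]
    simp
  · have h1 : i + 1 ≠ j := by omega
    rw [lp.single_apply_ne p j _ h1, lp.single_apply_ne p (j-1) _ h]
    simp

theorem Tpow_single (w : ℤ → ℝ) (hw : ∀ i : ℤ, w i = if 1 ≤ i then 2 else 1)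
    (T : lp (fun _ : ℤ => ℂ) p →L[ℂ] lp (fun _ : ℤ => ℂ) p)
    (hT : ∀ (f : lp (fun _ : ℤ => ℂ) p) (i : ℤ), (T f : ℤ → ℂ) i = (w (i + 1) : ℂ) * f (i + 1))
    (n : ℕ) (j : ℤ) : (T ^ n) (sg p j) = ((2:ℂ) ^ (ee j n)) • sg p (j - n) := by
  induction n generalizing j with
  | zero => simp [ee]
  | succ n ih =>
    have hTs : (T ^ (n+1)) (sg p j) = (T ^ n) (T (sg p j)) := by
      rw [pow_succ]
      rfl
    rw [hTs, T_single p w T hT j, map_smul, ih (j-1)]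
    rw [smul_smul]
    have hco : (w j : ℂ) * (2:ℂ) ^ (ee (j-1) n) = (2:ℂ) ^ (ee j (n+1)) := by
      rw [hw j]
      have hsplit : ee j (n+1) = (if 1 ≤ j then 1 else 0) + ee (j-1) n := by
        unfold ee
        split <;> omega
      rw [hsplit, pow_add]
      split <;> simp
    rw [hco]
    congr 2
    omega

theorem phi_csmul (φ : lp (fun _ : ℤ => ℂ) p →L[ℝ] ℝ) (c : ℂ) (x : lp (fun _ : ℤ => ℂ) p) :
    φ (c • x) = c.re * φ x + c.im * φ (Complex.I • x) := by
  have h1 : c • x = c.re • x + c.im • (Complex.I • x) := by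
    rw [← smul_assoc, ← algebraMap_smul ℂ c.re x, ← add_smul]
    congr 1
    simp [Complex.real_smul]
  rw [h1, map_add, map_smul, map_smul]
  simp

lemma cabs_re_le (z : ℂ) (hz : ‖z‖ = 1) : |z.re| ≤ 1 := by
  calc |z.re| ≤ ‖z‖ := Complex.abs_re_le_norm z
  _ = 1 := by rw [hz]

lemma cabs_im_le (z : ℂ) (hz : ‖z‖ = 1) : |z.im| ≤ 1 := by
  calc |z.im| ≤ ‖z‖ := Complex.abs_im_le_norm z
  _ = 1 := by rw [hz]

lemma ee_le_n (j : ℤ) (n : ℕ) : ee j n ≤ n := by unfold ee; omega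

lemma ee_le_pos (k n : ℕ) : ee ((MM k : ℤ)) n ≤ MM k := by unfold ee; omega

noncomputable def vv (φ : lp (fun _ : ℤ => ℂ) p →L[ℝ] ℝ) (n k : ℕ) : ℝ :=
  (2:ℝ) ^ (ee (MM k) n) * rr k *
    ((al k).re * φ (sg p ((MM k : ℤ) - n)) + (al k).im * φ (Complex.I • sg p ((MM k : ℤ) - n)))

lemma phi_T_term (w : ℤ → ℝ) (hw : ∀ i : ℤ, w i = if 1 ≤ i then 2 else 1)
    (T : lp (fun _ : ℤ => ℂ) p →L[ℂ] lp (fun _ : ℤ => ℂ) p)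
    (hT : ∀ (f : lp (fun _ : ℤ => ℂ) p) (i : ℤ), (T f : ℤ → ℂ) i = (w (i + 1) : ℂ) * f (i + 1))
    (φ : lp (fun _ : ℤ => ℂ) p →L[ℝ] ℝ) (n k : ℕ) :
    φ ((T ^ n) (cf k • sg p (MM k))) = vv p φ n k := by
  rw [map_smul, Tpow_single p w hw T hT n (MM k), smul_smul]
  have hc : cf k * (2:ℂ) ^ (ee (MM k) n)
      = ((((2:ℝ) ^ (ee (MM k) n) * rr k : ℝ)) : ℂ) * al k := by
    unfold cf; push_cast; ring
  rw [hc, phi_csmul]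
  unfold vv
  simp only [Complex.mul_re, Complex.mul_im, Complex.ofReal_re, Complex.ofReal_im]
  ring

lemma phi_Tn_ff (hp : p ≠ ∞) (w : ℤ → ℝ) (hw : ∀ i : ℤ, w i = if 1 ≤ i then 2 else 1)
    (T : lp (fun _ : ℤ => ℂ) p →L[ℂ] lp (fun _ : ℤ => ℂ) p)
    (hT : ∀ (f : lp (fun _ : ℤ => ℂ) p) (i : ℤ), (T f : ℤ → ℂ) i = (w (i + 1) : ℂ) * f (i + 1))
    (φ : lp (fun _ : ℤ => ℂ) p →L[ℝ] ℝ) (n : ℕ) :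
    HasSum (fun k => vv p φ n k) (φ ((T ^ n) (ff p))) := by
  have h1 : HasSum (fun k : ℕ => cf k • sg p (MM k)) (ff p) := (summable_ff p hp).hasSum
  have h2 := (T ^ n).hasSum h1
  have h3 := φ.hasSum h2
  have h4 : (fun k : ℕ => φ ((T ^ n) (cf k • sg p (MM k)))) = fun k => vv p φ n k :=
    funext fun k => phi_T_term p w hw T hT φ n k
  rwa [h4] at h3

lemma vv_bound (hp : p ≠ ∞) (φ : lp (fun _ : ℤ => ℂ) p →L[ℝ] ℝ) (n k : ℕ) :
    |vv p φ n k| ≤ 2 * ‖φ‖ * ((2:ℝ) ^ (ee (MM k) n) * rr k) := by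
  unfold vv
  rw [abs_mul, abs_mul]
  have h2 : |(2:ℝ) ^ (ee (MM k) n)| = (2:ℝ) ^ (ee (MM k) n) := abs_of_pos (by positivity)
  have h3 : |rr k| = rr k := abs_of_pos (rr_pos k)
  rw [h2, h3]
  have hsg : ‖sg p ((MM k : ℤ) - n)‖ = 1 := norm_sg p hp _
  have hisg : ‖Complex.I • sg p ((MM k : ℤ) - n)‖ = 1 := by
    rw [norm_smul, Complex.norm_I, hsg, one_mul]
  have b1 : |φ (sg p ((MM k : ℤ) - n))| ≤ ‖φ‖ := by
    have := φ.le_opNorm (sg p ((MM k : ℤ) - n))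
    rw [hsg, mul_one] at this
    simpa [Real.norm_eq_abs] using this
  have b2 : |φ (Complex.I • sg p ((MM k : ℤ) - n))| ≤ ‖φ‖ := by
    have := φ.le_opNorm (Complex.I • sg p ((MM k : ℤ) - n))
    rw [hisg, mul_one] at this
    simpa [Real.norm_eq_abs] using this
  have hre : |(al k).re| ≤ 1 := cabs_re_le _ (norm_al k)
  have him : |(al k).im| ≤ 1 := cabs_im_le _ (norm_al k)
  have hb : |((al k).re * φ (sg p ((MM k : ℤ) - n)) + (al k).im * φ (Complex.I • sg p ((MM k : ℤ) - n)))|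
      ≤ 2 * ‖φ‖ := by
    calc |(al k).re * φ (sg p ((MM k : ℤ) - n)) + (al k).im * φ (Complex.I • sg p ((MM k : ℤ) - n))|
        ≤ |(al k).re * φ (sg p ((MM k : ℤ) - n))| + |(al k).im * φ (Complex.I • sg p ((MM k : ℤ) - n))| := abs_add_le _ _
      _ ≤ 1 * ‖φ‖ + 1 * ‖φ‖ := by
          rw [abs_mul, abs_mul]
          have := mul_le_mul hre b1 (abs_nonneg _) zero_le_one
          have := mul_le_mul him b2 (abs_nonneg _) zero_le_one
          gcongr <;> first | assumption | exact abs_nonneg _ | exact norm_nonneg _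
      _ = 2 * ‖φ‖ := by ring
  calc (2:ℝ) ^ (ee (MM k) n) * rr k * |((al k).re * φ (sg p ((MM k : ℤ) - n)) + (al k).im * φ (Complex.I • sg p ((MM k : ℤ) - n)))|
      ≤ (2:ℝ) ^ (ee (MM k) n) * rr k * (2 * ‖φ‖) :=
        mul_le_mul_of_nonneg_left hb (mul_nonneg (by positivity) (rr_pos k).le)
    _ = 2 * ‖φ‖ * ((2:ℝ) ^ (ee (MM k) n) * rr k) := by ring





lemma exists_good_m (a b : ℝ) :
    ∃ m : ℕ, (Complex.I ^ m).re * a + (Complex.I ^ m).im * b = max |a| |b| := by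
  rcases le_total |b| |a| with h | h
  · rcases le_total 0 a with ha | ha
    · refine ⟨0, ?_⟩
      have hmax : max |a| |b| = a := by rw [max_eq_left h, abs_of_nonneg ha]
      simp [hmax]
    · refine ⟨2, ?_⟩
      rw [max_eq_left h, abs_of_nonpos ha]
      simp [pow_two, Complex.I_mul_I]
  · rcases le_total 0 b with hb | hb
    · refine ⟨1, ?_⟩
      have hmax : max |a| |b| = b := by rw [max_eq_right h, abs_of_nonneg hb]
      simp [hmax]
    · refine ⟨3, ?_⟩
      rw [max_eq_right h, abs_of_nonpos hb]
      have : Complex.I ^ 3 = -Complex.I := by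
        rw [pow_succ, pow_two, Complex.I_mul_I]; ring
      simp [this]

section A2
variable (p : ℝ≥0∞) [Fact (1 ≤ p)]
variable (p : ℝ≥0∞) [Fact (1 ≤ p)]

lemma single_eq_smul_sg (i : ℤ) (c : ℂ) :
    lp.single (E := fun _ : ℤ => ℂ) p i c = c • sg p i := by
  have := lp.single_smul (E := fun _ : ℤ => ℂ) (𝕜 := ℂ) p i c (1:ℂ)
  rw [smul_eq_mul, mul_one] at this
  rw [this]; rfl

lemma exists_nonzero_coord (hp : p ≠ ∞) (φ : lp (fun _ : ℤ => ℂ) p →L[ℝ] ℝ) (hφ : φ ≠ 0) :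
    ∃ i : ℤ, 0 < max |φ (sg p i)| |φ (Complex.I • sg p i)| := by
  by_contra h
  push_neg at h
  apply hφ
  ext x
  have hzero : ∀ i : ℤ, φ (sg p i) = 0 ∧ φ (Complex.I • sg p i) = 0 := by
    intro i
    have := h i
    constructor <;>
    · have h1 : (0:ℝ) ≤ |φ (sg p i)| := abs_nonneg _
      have h2 : (0:ℝ) ≤ |φ (Complex.I • sg p i)| := abs_nonneg _
      have := le_max_left |φ (sg p i)| |φ (Complex.I • sg p i)|
      have := le_max_right |φ (sg p i)| |φ (Complex.I • sg p i)|
      have habs : |φ (sg p i)| = 0 ∧ |φ (Complex.I • sg p i)| = 0 := by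
        constructor <;> [linarith; linarith]
      simp only [abs_eq_zero] at habs
      tauto
  have hs := lp.hasSum_single hp x
  have hsum := φ.hasSum hs
  have hterm : (fun i : ℤ => φ (lp.single p i (x i))) = fun _ => (0:ℝ) := by
    funext i
    rw [single_eq_smul_sg, phi_csmul]
    rw [(hzero i).1, (hzero i).2]
    ring
  rw [hterm] at hsum
  have := hasSum_zero (α := ℝ) (β := ℤ) (L := SummationFilter.unconditional ℤ)
  have heq := this.unique hsum
  simp [← heq]
end A2


lemma cube_facts (k N P Q : ℕ) (h : N + P + Q + 5 ≤ k) :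
    (N:ℤ) ≤ (k:ℤ)^3 - P - k^2 ∧
    ((k:ℤ)-1)^3 + N + k ≤ (k:ℤ)^3 - P - k^2 ∧
    (P:ℤ) ≤ (k:ℤ)^3 := by
  have hk : (5:ℤ) ≤ (k:ℤ) := by exact_mod_cast le_trans (by omega) h
  have hN : (N:ℤ) + P + Q + 5 ≤ k := by exact_mod_cast h
  have h0 : (0:ℤ) ≤ N := Int.natCast_nonneg N
  have h1 : (0:ℤ) ≤ P := Int.natCast_nonneg P
  have h2 : (0:ℤ) ≤ Q := Int.natCast_nonneg Q
  refine ⟨?_, ?_, ?_⟩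
  · nlinarith [sq_nonneg ((k:ℤ) - 2), sq_nonneg (k:ℤ)]
  · nlinarith [sq_nonneg ((k:ℤ) - 2), sq_nonneg (k:ℤ)]
  · nlinarith [sq_nonneg (k:ℤ)]

set_option maxHeartbeats 1000000 in
/-- Example 2.6 of the paper. The operator `(T f)(i) = w(i+1) f(i+1)`
on `ℓ^p(ℤ)`, where `w(i) = 2` for `i ≥ 1` and `w(i) = 1` for `i ≤ 0`, is convex-cyclic. -/
theorem stmt_12 (p : ℝ≥0∞) [Fact (1 ≤ p)] (hp : p ≠ ∞)
    (w : ℤ → ℝ) (hw : ∀ i : ℤ, w i = if 1 ≤ i then 2 else 1)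
    (T : lp (fun _ : ℤ => ℂ) p →L[ℂ] lp (fun _ : ℤ => ℂ) p)
    (hT : ∀ (f : lp (fun _ : ℤ => ℂ) p) (i : ℤ), (T f : ℤ → ℂ) i = (w (i + 1) : ℂ) * f (i + 1)) :
    ∃ f : lp (fun _ : ℤ => ℂ) p,
      Dense (convexHull ℝ (Set.range fun n : ℕ => (T ^ n) f)) := by
  classical
  refine ⟨ff p, ?_⟩
  by_contra hd
  have hd' : ¬ ∀ x, x ∈ closure (convexHull ℝ (Set.range fun n : ℕ => (T ^ n) (ff p))) := hd
  push_neg at hd'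
  obtain ⟨x, hx⟩ := hd'
  obtain ⟨φ, u, hsep, hxu⟩ := geometric_hahn_banach_closed_point
    ((convex_convexHull ℝ _).closure) isClosed_closure hx
  have horb : ∀ n : ℕ, φ ((T ^ n) (ff p)) < u := fun n =>
    hsep _ (subset_closure (subset_convexHull ℝ _ ⟨n, rfl⟩))
  have hφ : φ ≠ 0 := by
    rintro rfl
    have h1 := horb 0
    simp at h1 hxu
    linarith
  obtain ⟨i₀, hρ⟩ := exists_nonzero_coord p hp φ hφ
  set A : ℝ := φ (sg p i₀) with hA
  set B : ℝ := φ (Complex.I • sg p i₀) with hB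
  obtain ⟨m, hm⟩ := exists_good_m A B
  set ρ : ℝ := max |A| |B| with hρdef
  set C : ℝ := ‖φ‖ with hC
  have hC0 : (0:ℝ) ≤ C := norm_nonneg φ
  set D : ℝ := 2 * C with hD
  have hD0 : (0:ℝ) ≤ D := by positivity
  obtain ⟨N, hN⟩ := pow_unbounded_of_one_lt ((6*D + 3*|u| + 3)/ρ) (one_lt_two (α := ℝ))
  have hNρ : 6*D + 3*|u| + 3 < ρ * 2^N := by
    rw [div_lt_iff₀ hρ] at hN
    linarith
  set P := i₀.toNat with hP
  set Q := (-i₀).toNat with hQ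
  set K := N + P + Q + 5 with hK
  set k₀ := Nat.pair K (Encodable.encode ((i₀, (m:ℤ)) : ℤ × ℤ)) with hk₀
  have hKk : K ≤ k₀ := Nat.left_le_pair _ _
  have hdec : dec k₀ = (i₀, (m:ℤ)) := by
    rw [hk₀]; unfold dec; rw [Nat.unpair_pair]; exact Denumerable.ofNat_encode _
  clear_value k₀
  clear hk₀
  have hal : al k₀ = Complex.I ^ m := by
    unfold al; rw [hdec]; simp
  obtain ⟨fact1, fact2, fact3⟩ := cube_facts k₀ N P Q (by omega)
  have hMM : ((MM k₀ : ℕ) : ℤ) = (k₀:ℤ)^3 := by unfold MM; push_cast; ring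
  have hi₀MM : i₀ ≤ ((MM k₀ : ℕ) : ℤ) := by
    have h1 : i₀ ≤ (P : ℤ) := by rw [hP]; exact Int.self_le_toNat i₀
    rw [hMM]; linarith
  set n := (((MM k₀ : ℕ) : ℤ) - i₀).toNat with hn
  have hnz : (n : ℤ) = ((MM k₀ : ℕ) : ℤ) - i₀ := Int.toNat_of_nonneg (by linarith)
  have hE₀ : ((ee (MM k₀) n : ℕ) : ℤ) = ((MM k₀ : ℕ) : ℤ) - P := by
    unfold ee; omega
  -- main term value
  have hpos : ((MM k₀ : ℕ) : ℤ) - n = i₀ := by omega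
  have hvvmain : vv p φ n k₀ = (2:ℝ)^(ee (MM k₀) n) * rr k₀ * ρ := by
    unfold vv
    rw [hpos, hal, ← hA, ← hB, hm]
  -- zpow conversion
  set z : ℤ := ((MM k₀ : ℕ) : ℤ) - P - ((k₀:ℤ))^2 with hzdef
  have h20 : (2:ℝ) ≠ 0 := two_ne_zero
  have hzp : ∀ c : ℕ, rr c = (2:ℝ) ^ (-((c^2 : ℕ):ℤ)) := by
    intro c; unfold rr; rw [zpow_neg, zpow_natCast, inv_pow]
  have hez : ((ee (MM k₀) n : ℕ):ℤ) + (-((k₀^2:ℕ):ℤ)) = z := by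
    rw [hE₀, hzdef]; push_cast; ring
  have hmainz : vv p φ n k₀ = ρ * (2:ℝ) ^ z := by
    rw [hvvmain, hzp k₀, ← zpow_natCast (2:ℝ) (ee (MM k₀) n), ← zpow_add₀ h20, hez]
    ring
  have hzpow_pos : ∀ s : ℤ, (0:ℝ) < (2:ℝ) ^ s := fun s => zpow_pos (by norm_num) s
  have hmono : ∀ {s t : ℤ}, s ≤ t → (2:ℝ) ^ s ≤ (2:ℝ) ^ t :=
    fun hst => zpow_le_zpow_right₀ one_le_two hst
  -- sum decomposition
  have hsum := phi_Tn_ff p hp w hw T hT φ n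
  have hsummable := hsum.summable
  have hsplit : ∑ k ∈ Finset.range (k₀+1), vv p φ n k + ∑' k : ℕ, vv p φ n (k + (k₀+1))
      = φ ((T ^ n) (ff p)) := by
    rw [Summable.sum_add_tsum_nat_add (k₀+1) hsummable, hsum.tsum_eq]
  -- tail bound
  set Bt : ℝ := D * (2:ℝ) ^ ((n:ℤ) - (((k₀+1)^2 : ℕ):ℤ)) with hBt
  have htail : |∑' k : ℕ, vv p φ n (k + (k₀+1))| ≤ Bt * 2 := by
    have hgeo0 : HasSum (fun k : ℕ => (2⁻¹:ℝ) ^ k) 2 := by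
      have h := hasSum_geometric_of_lt_one (r := (2⁻¹:ℝ)) (by norm_num) (by norm_num)
      have h2 : ((1:ℝ) - 2⁻¹)⁻¹ = 2 := by norm_num
      rwa [h2] at h
    have hgeo : HasSum (fun k : ℕ => Bt * (2⁻¹:ℝ) ^ k) (Bt * 2) := hgeo0.mul_left Bt
    have hbd : ∀ k : ℕ, ‖vv p φ n (k + (k₀+1))‖ ≤ Bt * (2⁻¹:ℝ) ^ k := by
      intro k
      have h1 := vv_bound p hp φ n (k + (k₀+1))
      have h2 : (2:ℝ) ^ (ee (MM (k + (k₀+1))) n) ≤ (2:ℝ) ^ ((n:ℤ)) := by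
        rw [← zpow_natCast (2:ℝ)]
        exact hmono (by exact_mod_cast ee_le_n _ n)
      have h3 : rr (k + (k₀+1)) ≤ (2:ℝ) ^ (-(((k₀+1)^2:ℕ):ℤ)) * (2⁻¹:ℝ)^k := by
        rw [hzp (k + (k₀+1))]
        have hnl : ((k₀+1)^2 : ℕ) + k ≤ ((k + (k₀+1))^2 : ℕ) := by nlinarith
        have : (2:ℝ) ^ (-((((k + (k₀+1))^2 : ℕ)):ℤ)) ≤ (2:ℝ) ^ (-((((k₀+1)^2 : ℕ):ℤ) + (k:ℤ))) := by
          apply hmono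
          have hnl' : (((k₀+1)^2 : ℕ):ℤ) + (k:ℤ) ≤ (((k + (k₀+1))^2 : ℕ):ℤ) := by
            exact_mod_cast hnl
          linarith
        calc (2:ℝ) ^ (-((((k + (k₀+1))^2 : ℕ)):ℤ)) ≤ (2:ℝ) ^ (-((((k₀+1)^2 : ℕ):ℤ) + (k:ℤ))) := this
          _ = (2:ℝ) ^ (-(((k₀+1)^2:ℕ):ℤ)) * (2⁻¹:ℝ)^k := by
              rw [neg_add, zpow_add₀ h20]
              congr 1
              rw [zpow_neg, zpow_natCast, inv_pow]
      calc ‖vv p φ n (k + (k₀+1))‖ = |vv p φ n (k + (k₀+1))| := rfl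
        _ ≤ 2 * ‖φ‖ * ((2:ℝ) ^ (ee (MM (k + (k₀+1))) n) * rr (k + (k₀+1))) := h1
        _ ≤ D * ((2:ℝ) ^ ((n:ℤ)) * ((2:ℝ) ^ (-(((k₀+1)^2:ℕ):ℤ)) * (2⁻¹:ℝ)^k)) := by
            rw [hD, hC]
            apply mul_le_mul_of_nonneg_left _ (by positivity)
            have hr0 : (0:ℝ) < rr (k + (k₀+1)) := rr_pos _
            calc (2:ℝ) ^ (ee (MM (k + (k₀+1))) n) * rr (k + (k₀+1))
                ≤ (2:ℝ) ^ ((n:ℤ)) * rr (k + (k₀+1)) := by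
                  apply mul_le_mul_of_nonneg_right h2 hr0.le
              _ ≤ (2:ℝ) ^ ((n:ℤ)) * ((2:ℝ) ^ (-(((k₀+1)^2:ℕ):ℤ)) * (2⁻¹:ℝ)^k) := by
                  apply mul_le_mul_of_nonneg_left h3 (hzpow_pos _).le
        _ = Bt * (2⁻¹:ℝ) ^ k := by
            rw [hBt, sub_eq_add_neg, zpow_add₀ h20]
            ring
    have := tsum_of_norm_bounded hgeo hbd
    calc |∑' k : ℕ, vv p φ n (k + (k₀+1))| = ‖∑' k : ℕ, vv p φ n (k + (k₀+1))‖ := rfl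
      _ ≤ Bt * 2 := this
  -- finite part bound
  have hfin : |∑ k ∈ Finset.range k₀, vv p φ n k|
      ≤ (k₀:ℝ) * (D * (2:ℝ) ^ ((((k₀-1)^3:ℕ)):ℤ)) := by
    have hterm : ∀ k ∈ Finset.range k₀, |vv p φ n k| ≤ D * (2:ℝ) ^ ((((k₀-1)^3:ℕ)):ℤ) := by
      intro k hk
      have hkk : k ≤ k₀ - 1 := by
        have := Finset.mem_range.mp hk
        omega
      have h1 := vv_bound p hp φ n k
      have h2 : (2:ℝ) ^ (ee (MM k) n) ≤ (2:ℝ) ^ ((((k₀-1)^3:ℕ)):ℤ) := by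
        rw [← zpow_natCast (2:ℝ)]
        apply hmono
        have : ee (MM k) n ≤ MM k := ee_le_pos k n
        have h3 : MM k ≤ (k₀-1)^3 := by
          unfold MM
          exact Nat.pow_le_pow_left hkk 3
        exact_mod_cast le_trans this h3
      calc |vv p φ n k| ≤ 2 * ‖φ‖ * ((2:ℝ) ^ (ee (MM k) n) * rr k) := h1
        _ ≤ D * ((2:ℝ) ^ ((((k₀-1)^3:ℕ)):ℤ) * 1) := by
            rw [hD, hC]
            apply mul_le_mul_of_nonneg_left _ (by positivity)
            apply mul_le_mul h2 (rr_le_one k) (rr_pos k).le (hzpow_pos _).le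
        _ = D * (2:ℝ) ^ ((((k₀-1)^3:ℕ)):ℤ) := by ring
    calc |∑ k ∈ Finset.range k₀, vv p φ n k| ≤ ∑ k ∈ Finset.range k₀, |vv p φ n k| :=
          Finset.abs_sum_le_sum_abs _ _
      _ ≤ ∑ _k ∈ Finset.range k₀, D * (2:ℝ) ^ ((((k₀-1)^3:ℕ)):ℤ) := by
          apply Finset.sum_le_sum hterm
      _ = (k₀:ℝ) * (D * (2:ℝ) ^ ((((k₀-1)^3:ℕ)):ℤ)) := by
          rw [Finset.sum_const, Finset.card_range, nsmul_eq_mul]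
  -- the three dominance inequalities
  have hNz : (N:ℤ) ≤ z := by
    rw [hzdef, hMM]
    exact_mod_cast fact1
  have hq1 : 3*|u| + 3 ≤ ρ * (2:ℝ) ^ z := by
    have h1 : ρ * (2:ℝ)^(N:ℤ) ≤ ρ * (2:ℝ)^z := by
      apply mul_le_mul_of_nonneg_left (hmono hNz) hρ.le
    have h2 : (2:ℝ)^(N:ℤ) = (2:ℝ)^N := zpow_natCast _ _
    nlinarith [hzpow_pos (N:ℤ)]
  have hc₁ : ((((k₀-1)^3:ℕ)):ℤ) = ((k₀:ℤ)-1)^3 := by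
    have hk1 : (1:ℕ) ≤ k₀ := by omega
    push_cast [Nat.cast_sub hk1]
    ring
  have hq2 : 3 * ((k₀:ℝ) * (D * (2:ℝ) ^ ((((k₀-1)^3:ℕ)):ℤ))) ≤ ρ * (2:ℝ) ^ z := by
    have h1 : ((((k₀-1)^3:ℕ)):ℤ) + N + k₀ ≤ z := by
      rw [hc₁, hzdef, hMM]
      exact_mod_cast fact2
    have h2 : (2:ℝ) ^ ((((k₀-1)^3:ℕ)):ℤ) * (2:ℝ)^(N:ℤ) * (2:ℝ)^((k₀:ℕ):ℤ) ≤ (2:ℝ) ^ z := by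
      rw [← zpow_add₀ h20, ← zpow_add₀ h20]
      exact hmono (by linarith)
    have h3 : (k₀:ℝ) ≤ (2:ℝ)^((k₀:ℕ):ℤ) := by
      rw [zpow_natCast]
      exact_mod_cast (Nat.lt_two_pow_self (n := k₀)).le
    have h4 : ρ * (2:ℝ)^(N:ℤ) > 3 * D := by
      rw [zpow_natCast]
      nlinarith [abs_nonneg u]
    have p1 : (0:ℝ) < (2:ℝ) ^ ((((k₀-1)^3:ℕ)):ℤ) := hzpow_pos _
    have p2 : (0:ℝ) < (2:ℝ) ^ (N:ℤ) := hzpow_pos _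
    have p3 : (0:ℝ) < (2:ℝ) ^ ((k₀:ℕ):ℤ) := hzpow_pos _
    have hk₀0 : (0:ℝ) ≤ (k₀:ℝ) := Nat.cast_nonneg _
    calc 3 * ((k₀:ℝ) * (D * (2:ℝ) ^ ((((k₀-1)^3:ℕ)):ℤ)))
        = (3 * D) * ((k₀:ℝ) * (2:ℝ) ^ ((((k₀-1)^3:ℕ)):ℤ)) := by ring
      _ ≤ (ρ * (2:ℝ)^(N:ℤ)) * ((k₀:ℝ) * (2:ℝ) ^ ((((k₀-1)^3:ℕ)):ℤ)) := by
          apply mul_le_mul_of_nonneg_right h4.le (by positivity)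
      _ ≤ (ρ * (2:ℝ)^(N:ℤ)) * ((2:ℝ)^((k₀:ℕ):ℤ) * (2:ℝ) ^ ((((k₀-1)^3:ℕ)):ℤ)) := by
          apply mul_le_mul_of_nonneg_left _ (by positivity)
          apply mul_le_mul_of_nonneg_right h3 p1.le
      _ = ρ * ((2:ℝ) ^ ((((k₀-1)^3:ℕ)):ℤ) * (2:ℝ)^(N:ℤ) * (2:ℝ)^((k₀:ℕ):ℤ)) := by ring
      _ ≤ ρ * (2:ℝ) ^ z := mul_le_mul_of_nonneg_left h2 hρ.le
  have hq3 : 3 * (Bt * 2) ≤ ρ * (2:ℝ) ^ z := by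
    have hiPQ : i₀ = (P:ℤ) - Q := by omega
    have hnPQ : (n:ℤ) = ((MM k₀ : ℕ) : ℤ) - P + Q := by omega
    have hsq : (((k₀+1)^2 : ℕ):ℤ) = (k₀:ℤ)^2 + 2*k₀ + 1 := by push_cast; ring
    have hzn : z = ((n:ℤ) - (((k₀+1)^2 : ℕ):ℤ)) + (2*(k₀:ℤ) + 1 - Q) := by
      rw [hzdef, hnPQ, hsq]; ring
    have hNk : (N:ℤ) ≤ 2*(k₀:ℤ) + 1 - Q := by
      have h5 : (N:ℕ) + Q ≤ k₀ := by omega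
      have h6 : ((N:ℕ):ℤ) + ((Q:ℕ):ℤ) ≤ (k₀:ℤ) := by exact_mod_cast h5
      linarith
    have h2 : (2:ℝ) ^ ((n:ℤ) - (((k₀+1)^2 : ℕ):ℤ)) * (2:ℝ)^(N:ℤ) ≤ (2:ℝ) ^ z := by
      rw [← zpow_add₀ h20, hzn]
      exact hmono (by linarith)
    have h4 : ρ * (2:ℝ)^(N:ℤ) > 6 * D := by
      rw [zpow_natCast]
      nlinarith [abs_nonneg u]
    have p1 : (0:ℝ) < (2:ℝ) ^ ((n:ℤ) - (((k₀+1)^2 : ℕ):ℤ)) := hzpow_pos _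
    calc 3 * (Bt * 2) = (6 * D) * (2:ℝ) ^ ((n:ℤ) - (((k₀+1)^2 : ℕ):ℤ)) := by rw [hBt]; ring
      _ ≤ (ρ * (2:ℝ)^(N:ℤ)) * (2:ℝ) ^ ((n:ℤ) - (((k₀+1)^2 : ℕ):ℤ)) := by
          apply mul_le_mul_of_nonneg_right h4.le p1.le
      _ = ρ * ((2:ℝ) ^ ((n:ℤ) - (((k₀+1)^2 : ℕ):ℤ)) * (2:ℝ)^(N:ℤ)) := by ring
      _ ≤ ρ * (2:ℝ) ^ z := mul_le_mul_of_nonneg_left h2 hρ.le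
  -- conclusion
  have hsum_succ : ∑ k ∈ Finset.range (k₀+1), vv p φ n k
      = ∑ k ∈ Finset.range k₀, vv p φ n k + vv p φ n k₀ := Finset.sum_range_succ _ _
  have hub := horb n
  rw [← hsplit, hsum_succ] at hub
  have habs1 : -( (k₀:ℝ) * (D * (2:ℝ) ^ ((((k₀-1)^3:ℕ)):ℤ))) ≤ ∑ k ∈ Finset.range k₀, vv p φ n k := by
    have := abs_le.mp hfin
    linarith [this.1]
  have habs2 : -(Bt * 2) ≤ ∑' k : ℕ, vv p φ n (k + (k₀+1)) := by
    have := abs_le.mp htail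
    linarith [this.1]
  have hu_abs : u ≤ |u| := le_abs_self u
  rw [hmainz] at hub
  linarith
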